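/- Let ε > 2^{-k/12} and δ ∈ [0,1] with ε = 2(1-δ)^{k/2}. Let f₁,...,f_t : {0,1}^n → {0,1} and B : ({0,1}^n)^k → {0,1}^k satisfy: (1) for all i ≠ j, Pr over x̄ ∈ ({0,1}^n)^k that f_i^{⊕k}(x̄) = f_j^{⊕k}(x̄) is strictly less than 1/2 + ε⁶/2; and (2) for all i, Pr over x̄ that f_i^k(x̄) = B(x̄) is at least ε. Then t ≤ 2/ε. -/

import Mathlib

open Classical Finset

/-- Uniform probability of an event over a finite type. -/
noncomputable def pr {α : Type*} [Fintype α] (p : α → Prop) : ℝ :=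
  ((Finset.univ.filter p).card : ℝ) / (Fintype.card α : ℝ)

/-- k-wise XOR of `f` on a tuple: true iff an odd number of coordinates map to `true`. -/
def xorf {n k : ℕ} (f : (Fin n → Bool) → Bool) (x : Fin k → Fin n → Bool) : Prop :=
  Odd ((Finset.univ.filter fun i => f (x i) = true).card)

lemma nat_P (j : ℕ) (hj : 2 ≤ j) : 2^43 * (j-1)^25 ≤ j^43 := by
  rcases Nat.lt_or_ge j 6 with h | h
  · interval_cases j <;> norm_num
  · have h1 : (j-1)^25 ≤ j^25 := Nat.pow_le_pow_left (Nat.sub_le j 1) 25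
    have h2 : (2:ℕ)^43 ≤ j^18 := le_trans (by norm_num : (2:ℕ)^43 ≤ 6^18) (Nat.pow_le_pow_left h 18)
    calc 2^43 * (j-1)^25 ≤ j^18 * j^25 := Nat.mul_le_mul h2 h1
    _ = j^43 := by ring

lemma real_P (j : ℕ) (hj : 2 ≤ j) : (j:ℝ) - 1 ≤ ((j:ℝ)/2) ^ ((43:ℝ)/25) := by
  have hj2 : (2:ℝ) ≤ (j:ℝ) := by exact_mod_cast hj
  have hc : (0:ℝ) ≤ (j:ℝ)/2 := by positivity
  have hcastsub : ((j-1 : ℕ):ℝ) = (j:ℝ) - 1 := by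
    rw [Nat.cast_sub (by omega : 1 ≤ j)]; norm_num
  have hN : ((j:ℝ)-1)^(25:ℕ) ≤ ((j:ℝ)/2)^(43:ℕ) := by
    have hcast : ((2^43 * (j-1)^25 : ℕ) : ℝ) ≤ ((j^43 : ℕ) : ℝ) := by exact_mod_cast nat_P j hj
    push_cast at hcast
    rw [hcastsub] at hcast
    rw [div_pow, le_div_iff₀ (by positivity)]
    calc ((j:ℝ)-1)^25 * 2^43 = 2^43 * ((j:ℝ)-1)^25 := by ring
    _ ≤ (j:ℝ)^43 := by linarith [hcast]
  by_contra hcon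
  push_neg at hcon
  have hpow : (((j:ℝ)/2) ^ ((43:ℝ)/25))^(25:ℕ) < ((j:ℝ)-1)^(25:ℕ) :=
    pow_lt_pow_left₀ hcon (Real.rpow_nonneg hc _) (by norm_num)
  have heq : (((j:ℝ)/2) ^ ((43:ℝ)/25))^(25:ℕ) = ((j:ℝ)/2)^(43:ℕ) := by
    rw [← Real.rpow_natCast (((j:ℝ)/2) ^ ((43:ℝ)/25)) 25, ← Real.rpow_mul hc,
      show ((43:ℝ)/25 * (25:ℕ)) = ((43:ℕ):ℝ) by norm_num, Real.rpow_natCast]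
  rw [heq] at hpow
  linarith

lemma real_P' (j : ℕ) (hj : 2 ≤ j) : (2/(j:ℝ)) ^ ((43:ℝ)/25) * ((j:ℝ)-1) ≤ 1 := by
  have hj2 : (2:ℝ) ≤ (j:ℝ) := by exact_mod_cast hj
  have hPpos : (0:ℝ) < ((j:ℝ)/2) ^ ((43:ℝ)/25) := Real.rpow_pos_of_pos (by positivity) _
  rw [show (2/(j:ℝ)) = ((j:ℝ)/2)⁻¹ by rw [inv_div], Real.inv_rpow (by positivity),
    mul_comm, ← div_eq_mul_inv, div_le_one hPpos]
  exact real_P j hj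

lemma counting (ε : ℝ) (hε0 : 0 < ε) (hε1 : ε ≤ 1) :
    ((⌊2/ε⌋₊:ℝ)*(⌊2/ε⌋₊:ℝ) - (⌊2/ε⌋₊:ℝ)) * ε ^ ((68:ℝ)/25) ≤ 2*((⌊2/ε⌋₊:ℝ)*ε) - 2 := by
  set m : ℕ := ⌊2/ε⌋₊ with hmdef
  have hm2 : 2 ≤ m := Nat.le_floor (by rw [le_div_iff₀ hε0]; norm_num; linarith)
  have hm2R : (2:ℝ) ≤ (m:ℝ) := by exact_mod_cast hm2
  have hmub : (m:ℝ) ≤ 2/ε := Nat.floor_le (by positivity)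
  have hmlb : 2/ε < (m:ℝ) + 1 := by
    have := Nat.lt_floor_add_one (2/ε); push_cast at this ⊢; linarith
  have hmpos : (0:ℝ) < m := by linarith
  set a : ℝ := 2/((m:ℝ)+1) with hadef
  set b : ℝ := 2/(m:ℝ) with hbdef
  have hapos : 0 < a := by positivity
  have hbpos : 0 < b := by positivity
  have hεa : a ≤ ε := by
    rw [hadef, div_le_iff₀ (by linarith)]
    rw [div_lt_iff₀ hε0] at hmlb
    linarith
  have hεb : ε ≤ b := by
    rw [hbdef, le_div_iff₀ hmpos]
    rw [le_div_iff₀ hε0] at hmub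
    linarith
  have hab : a < b := by
    rw [hadef, hbdef, div_lt_div_iff₀ (by linarith) hmpos]; linarith
  have hq : ∀ c : ℝ, 0 < c → c ^ ((68:ℝ)/25) = c * c ^ ((43:ℝ)/25) := by
    intro c hc
    rw [show ((68:ℝ)/25) = 1 + 43/25 by norm_num, Real.rpow_add hc, Real.rpow_one]
  have hC0 : (0:ℝ) ≤ (m:ℝ)*(m:ℝ) - (m:ℝ) := by nlinarith
  -- endpoint 1 : at b
  have E1 : ((m:ℝ)*(m:ℝ) - (m:ℝ)) * b ^ ((68:ℝ)/25) ≤ 2*((m:ℝ)*b) - 2 := by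
    have hmb : (m:ℝ) * b = 2 := by rw [hbdef]; field_simp
    have hP := real_P' m hm2
    rw [hq b hbpos, hmb]
    calc ((m:ℝ)*(m:ℝ) - (m:ℝ)) * (b * b ^ ((43:ℝ)/25))
        = ((m:ℝ)*b) * (b ^ ((43:ℝ)/25) * ((m:ℝ)-1)) := by ring
      _ = 2 * (b ^ ((43:ℝ)/25) * ((m:ℝ)-1)) := by rw [hmb]
      _ ≤ 2 * 1 := by
          apply mul_le_mul_of_nonneg_left _ (by norm_num)
          exact hP
      _ = 2*2 - 2 := by norm_num
  -- endpoint 2 : at a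
  have E2 : ((m:ℝ)*(m:ℝ) - (m:ℝ)) * a ^ ((68:ℝ)/25) ≤ 2*((m:ℝ)*a) - 2 := by
    have hP := real_P' (m+1) (by omega)
    push_cast at hP
    have hRHS : 2*((m:ℝ)*a) - 2 = ((m:ℝ)-1) * a := by
      rw [hadef]; field_simp; ring
    rw [hq a hapos, hRHS]
    calc ((m:ℝ)*(m:ℝ) - (m:ℝ)) * (a * a ^ ((43:ℝ)/25))
        = (((m:ℝ)-1) * a) * (a ^ ((43:ℝ)/25) * ((m:ℝ)+1-1)) := by ring
      _ ≤ (((m:ℝ)-1) * a) * 1 := by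
          apply mul_le_mul_of_nonneg_left hP (by nlinarith)
      _ = ((m:ℝ)-1) * a := by ring
  -- convex combination
  set u : ℝ := (b-ε)/(b-a) with hudef
  set v : ℝ := (ε-a)/(b-a) with hvdef
  have hba : 0 < b - a := by linarith
  have hu0 : 0 ≤ u := by apply div_nonneg <;> linarith
  have hv0 : 0 ≤ v := by apply div_nonneg <;> linarith
  have huv : u + v = 1 := by rw [hudef, hvdef, ← add_div, div_eq_one_iff_eq (ne_of_gt hba)]; ring
  have hcomb : u*a + v*b = ε := by rw [hudef, hvdef]; field_simp; ring
  have hconv := (convexOn_rpow (by norm_num : (1:ℝ) ≤ 68/25)).2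
    (Set.mem_Ici.mpr (le_of_lt hapos)) (Set.mem_Ici.mpr (le_of_lt hbpos)) hu0 hv0 huv
  simp only [smul_eq_mul] at hconv
  rw [hcomb] at hconv
  calc ((m:ℝ)*(m:ℝ) - (m:ℝ)) * ε ^ ((68:ℝ)/25)
      ≤ ((m:ℝ)*(m:ℝ) - (m:ℝ)) * (u * a ^ ((68:ℝ)/25) + v * b ^ ((68:ℝ)/25)) :=
        mul_le_mul_of_nonneg_left hconv hC0
    _ = u * (((m:ℝ)*(m:ℝ) - (m:ℝ)) * a ^ ((68:ℝ)/25)) + v * (((m:ℝ)*(m:ℝ) - (m:ℝ)) * b ^ ((68:ℝ)/25)) := by ring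
    _ ≤ u * (2*((m:ℝ)*a) - 2) + v * (2*((m:ℝ)*b) - 2) := by
        apply add_le_add
        · exact mul_le_mul_of_nonneg_left E2 hu0
        · exact mul_le_mul_of_nonneg_left E1 hv0
    _ = 2*((m:ℝ)*(u*a+v*b)) - 2*(u+v) := by ring
    _ = 2*((m:ℝ)*ε) - 2 := by rw [huv, hcomb]; ring

lemma exp_aux (h : ℝ) (h0 : 0 ≤ h) (h1 : h ≤ 1) :
    Real.exp h + Real.exp (-h) ≤ 2 * Real.exp (h^2/2) := by
  have habs : |h| ≤ 1 := by rw [abs_of_nonneg h0]; exact h1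
  have habs' : |(-h)| ≤ 1 := by rwa [abs_neg]
  have b1 := Real.exp_bound habs (by norm_num : 0 < 4)
  have b2 := Real.exp_bound habs' (by norm_num : 0 < 4)
  have hs1 : ∑ i ∈ Finset.range 4, h ^ i / (Nat.factorial i) = 1 + h + h^2/2 + h^3/6 := by
    simp [Finset.sum_range_succ, Nat.factorial]
    try ring
  have hs2 : ∑ i ∈ Finset.range 4, (-h) ^ i / (Nat.factorial i) = 1 - h + h^2/2 - h^3/6 := by
    simp [Finset.sum_range_succ, Nat.factorial]
    try ring
  rw [hs1] at b1
  rw [hs2] at b2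
  rw [abs_of_nonneg h0] at b1
  rw [abs_neg, abs_of_nonneg h0] at b2
  have e1 : Real.exp h ≤ 1 + h + h^2/2 + h^3/6 + h^4 * (5/96) := by
    have := (abs_le.mp b1).2
    norm_num [Nat.factorial] at this
    linarith
  have e2 : Real.exp (-h) ≤ 1 - h + h^2/2 - h^3/6 + h^4 * (5/96) := by
    have := (abs_le.mp b2).2
    norm_num [Nat.factorial] at this
    linarith
  have e3 : (1 + h^2/4)^2 ≤ Real.exp (h^2/2) := by
    have h4 : Real.exp (h^2/2) = (Real.exp (h^2/4))^2 := by
      rw [← Real.exp_nat_mul]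
      congr 1
      push_cast
      ring
    rw [h4]
    have := Real.add_one_le_exp (h^2/4)
    have hpos : (0:ℝ) ≤ 1 + h^2/4 := by positivity
    calc (1 + h^2/4)^2 ≤ (Real.exp (h^2/4))^2 := by
          apply pow_le_pow_left₀ hpos (by linarith)
      _ = _ := rfl
  nlinarith [pow_nonneg h0 4]

lemma pair_pow_bound (k : ℕ) (hk : 1 ≤ k) (ε : ℝ) (hε0 : 0 < ε) (hε1 : ε ≤ 1)
    (hlb : (2:ℝ) ^ (-(k:ℝ)/12) < ε) :
    ((1 + ε ^ ((6:ℝ)/(k:ℝ)))/2) ^ k ≤ ε ^ ((68:ℝ)/25) := by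
  have hkR : (1:ℝ) ≤ (k:ℝ) := by exact_mod_cast hk
  have hkne : (k:ℝ) ≠ 0 := by linarith
  set L : ℝ := -Real.log ε with hLdef
  have hL0 : 0 ≤ L := by
    rw [hLdef]; simp only [neg_nonneg]; exact Real.log_nonpos (le_of_lt hε0) hε1
  have hLub : L < (k:ℝ)/12 * Real.log 2 := by
    have hlog : Real.log ((2:ℝ) ^ (-(k:ℝ)/12)) < Real.log ε :=
      Real.log_lt_log (Real.rpow_pos_of_pos (by norm_num) _) hlb
    rw [Real.log_rpow (by norm_num)] at hlog
    rw [hLdef]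
    nlinarith
  set w : ℝ := 6*L/(k:ℝ) with hwdef
  have hw0 : 0 ≤ w := by rw [hwdef]; positivity
  have hwub : w < Real.log 2 / 2 := by
    rw [hwdef, div_lt_div_iff₀ (by linarith) (by norm_num)]
    nlinarith
  have hlog2 : Real.log 2 < 0.6931471808 := Real.log_two_lt_d9
  have hw1 : w ≤ 1 := by nlinarith
  have hx : ε ^ ((6:ℝ)/(k:ℝ)) = Real.exp (-w) := by
    rw [Real.rpow_def_of_pos hε0, hwdef, hLdef]
    congr 1
    field_simp
  -- key pointwise bound
  have hkey : (1 + Real.exp (-w))/2 ≤ Real.exp (w^2/8 - w/2) := by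
    have := exp_aux (w/2) (by linarith) (by linarith)
    have hmul := mul_le_mul_of_nonneg_right this (le_of_lt (Real.exp_pos (-(w/2))))
    rw [add_mul, mul_assoc, ← Real.exp_add, ← Real.exp_add, ← Real.exp_add] at hmul
    have h1 : w/2 + -(w/2) = 0 := by ring
    have h2 : -(w/2) + -(w/2) = -w := by ring
    have h3 : (w/2)^2/2 + -(w/2) = w^2/8 - w/2 := by ring
    rw [h1, h2, h3, Real.exp_zero] at hmul
    linarith
  have hbase0 : (0:ℝ) ≤ (1 + ε ^ ((6:ℝ)/(k:ℝ)))/2 := by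
    have := Real.rpow_nonneg (le_of_lt hε0) ((6:ℝ)/(k:ℝ))
    linarith
  calc ((1 + ε ^ ((6:ℝ)/(k:ℝ)))/2) ^ k
      ≤ (Real.exp (w^2/8 - w/2)) ^ k := by
        apply pow_le_pow_left₀ hbase0
        rw [hx]; exact hkey
    _ = Real.exp ((k:ℝ) * (w^2/8 - w/2)) := by
        rw [← Real.exp_nat_mul]
    _ ≤ Real.exp (-(68/25) * L) := by
        apply Real.exp_le_exp.mpr
        have hww : (k:ℝ) * w = 6 * L := by rw [hwdef]; field_simp
        have hw2 : (k:ℝ) * w^2 = 6 * L * w := by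
          rw [pow_two, ← mul_assoc, hww]
        rw [mul_sub, ← mul_div_assoc, ← mul_div_assoc, hw2, hww]
        -- need 6Lw/8 - 3L ≤ -(68/25) L  i.e. (3/4)Lw ≤ (7/25)L
        have : 6*L*w/8 ≤ (7/25)*L := by
          rcases eq_or_lt_of_le hL0 with h0 | h0
          · rw [← h0]; norm_num
          · have : w < Real.log 2 / 2 := hwub
            nlinarith
        linarith
    _ = ε ^ ((68:ℝ)/25) := by
        rw [Real.rpow_def_of_pos hε0, hLdef]
        congr 1
        ring

-- parity lemma
lemma parity_lemma {ι : Type*} [Fintype ι] (q r : ι → Bool) :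
    ((Odd (univ.filter fun l => q l = true).card) ↔ (Odd (univ.filter fun l => r l = true).card))
    ↔ Even ((univ.filter fun l => ¬(q l = r l)).card) := by
  classical
  have key : (univ.filter fun l => q l = true).card + (univ.filter fun l => r l = true).card
      = 2*((univ.filter fun l => q l = true ∧ r l = true).card)
        + (univ.filter fun l => ¬(q l = r l)).card := by
    rw [Finset.card_filter, Finset.card_filter, Finset.card_filter, Finset.card_filter,
      ← Finset.sum_add_distrib, Finset.mul_sum, ← Finset.sum_add_distrib]
    apply Finset.sum_congr rfl
    intro l _
    cases hq : q l <;> cases hr : r l <;> simp [hq, hr]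
  constructor
  · intro hiff
    have : Even ((univ.filter fun l => q l = true).card + (univ.filter fun l => r l = true).card) := by
      rw [Nat.even_add]
      rw [← Nat.not_even_iff_odd, ← Nat.not_even_iff_odd] at hiff
      tauto
    rw [key] at this
    rcases this with ⟨c, hc⟩
    exact ⟨c - (univ.filter fun l => q l = true ∧ r l = true).card, by omega⟩
  · intro heven
    have : Even ((univ.filter fun l => q l = true).card + (univ.filter fun l => r l = true).card) := by
      rw [key]
      rcases heven with ⟨c, hc⟩
      exact ⟨(univ.filter fun l => q l = true ∧ r l = true).card + c, by omega⟩
    rw [Nat.even_add] at this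
    rw [← Nat.not_even_iff_odd, ← Nat.not_even_iff_odd]
    tauto

lemma xor_count (n k : ℕ) (p p' : (Fin n → Bool) → Bool) :
    (((univ.filter fun x : Fin k → Fin n → Bool => (xorf p x ↔ xorf p' x)).card : ℝ))
    = ((Fintype.card (Fin k → Fin n → Bool) : ℝ)
       + (2*((univ.filter fun y : Fin n → Bool => p y = p' y).card:ℝ)
          - (Fintype.card (Fin n → Bool):ℝ))^k)/2 := by
  classical
  set e : ℕ := (univ.filter fun y : Fin n → Bool => p y = p' y).card with hedef
  set M : ℕ := Fintype.card (Fin n → Bool) with hMdef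
  set g : (Fin n → Bool) → ℝ := fun y => if p y = p' y then 1 else -1 with hgdef
  -- sum of g
  have hsum : ∑ y : Fin n → Bool, g y = 2*(e:ℝ) - M := by
    rw [hgdef]
    rw [Finset.sum_ite, Finset.sum_const, Finset.sum_const]
    have hsplit : (univ.filter fun y : Fin n → Bool => ¬(p y = p' y)).card = M - e := by
      have := Finset.card_filter_add_card_filter_not
        (s := (univ : Finset (Fin n → Bool))) (p := fun y => p y = p' y)
      simp only [Finset.card_univ] at this
      omega
    have he : e ≤ M := by
      rw [hedef, hMdef, ← Finset.card_univ]
      exact Finset.card_filter_le _ _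
    rw [hsplit]
    simp only [nsmul_eq_mul, mul_one, mul_neg_one]
    rw [Nat.cast_sub he]
    push_cast
    ring
  -- product of g over tuple = (-1)^(disagreement count)
  have hprod : ∀ x : Fin k → Fin n → Bool,
      (∏ l : Fin k, g (x l)) = (-1:ℝ)^((univ.filter fun l => ¬(p (x l) = p' (x l))).card) := by
    intro x
    rw [Finset.card_filter]
    rw [← Finset.prod_pow_eq_pow_sum]
    apply Finset.prod_congr rfl
    intro l _
    by_cases hl : p (x l) = p' (x l) <;> simp [hgdef, hl]
  -- sum over tuples of product = (sum g)^k
  have hSP : ∑ x : Fin k → Fin n → Bool, (∏ l : Fin k, g (x l)) = (∑ y : Fin n → Bool, g y)^k := by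
    rw [show (∑ y : Fin n → Bool, g y)^k = ∏ _l : Fin k, ∑ y : Fin n → Bool, g y from by
      rw [Finset.prod_const, Finset.card_univ, Fintype.card_fin]]
    rw [Finset.prod_univ_sum]
    rw [Fintype.piFinset_univ]
  -- count of tuples with even disagreement
  have hpt : ∀ x : Fin k → Fin n → Bool, (if Even ((univ.filter fun l => ¬(p (x l) = p' (x l))).card) then (1:ℝ) else 0)
      = (1 + (-1:ℝ)^((univ.filter fun l => ¬(p (x l) = p' (x l))).card))/2 := by
    intro x
    by_cases hx : Even ((univ.filter fun l => ¬(p (x l) = p' (x l))).card)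
    · rw [if_pos hx, hx.neg_one_pow]; norm_num
    · rw [if_neg hx, (Nat.not_even_iff_odd.mp hx).neg_one_pow]; norm_num
  have hEvenCount : (((univ.filter fun x : Fin k → Fin n → Bool =>
        Even ((univ.filter fun l => ¬(p (x l) = p' (x l))).card)).card : ℝ))
      = ((Fintype.card (Fin k → Fin n → Bool) : ℝ) + (2*(e:ℝ) - M)^k)/2 := by
    have h1 : (((univ.filter fun x : Fin k → Fin n → Bool =>
          Even ((univ.filter fun l => ¬(p (x l) = p' (x l))).card)).card : ℝ))
        = ∑ x : Fin k → Fin n → Bool, (if Even ((univ.filter fun l => ¬(p (x l) = p' (x l))).card) then (1:ℝ) else 0) := by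
      rw [Finset.card_filter]
      push_cast
      rfl
    rw [h1, Finset.sum_congr rfl (fun x _ => hpt x)]
    rw [← Finset.sum_div, Finset.sum_add_distrib, Finset.sum_const, Finset.card_univ,
      nsmul_eq_mul, mul_one]
    have hminus : ∑ x : Fin k → Fin n → Bool, (-1:ℝ)^((univ.filter fun l => ¬(p (x l) = p' (x l))).card)
        = (2*(e:ℝ) - M)^k := by
      rw [Finset.sum_congr rfl (fun x _ => (hprod x).symm), hSP, hsum]
    rw [hminus]
  -- identify the filter sets
  have hfilter : (univ.filter fun x : Fin k → Fin n → Bool => (xorf p x ↔ xorf p' x))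
      = univ.filter fun x : Fin k → Fin n → Bool =>
          Even ((univ.filter fun l => ¬(p (x l) = p' (x l))).card) := by
    apply Finset.filter_congr
    intro x _
    simpa [xorf] using parity_lemma (fun l => p (x l)) (fun l => p' (x l))
  rw [hfilter, hEvenCount]

lemma all_count (n k : ℕ) (p p' : (Fin n → Bool) → Bool) :
    (univ.filter fun x : Fin k → Fin n → Bool => ∀ l, p (x l) = p' (x l)).card
    = ((univ.filter fun y : Fin n → Bool => p y = p' y).card) ^ k := by
  classical
  have h : (univ.filter fun x : Fin k → Fin n → Bool => ∀ l, p (x l) = p' (x l))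
      = Fintype.piFinset (fun _ : Fin k => univ.filter fun y : Fin n → Bool => p y = p' y) := by
    ext x
    simp [Fintype.mem_piFinset]
  rw [h, Fintype.card_piFinset]
  simp

lemma bonferroni {α I : Type*} [Fintype α] [DecidableEq α] [DecidableEq I] (T : Finset I) (A : I → Finset α) :
    2 * ∑ i ∈ T, ((A i).card:ℝ) ≤ 2 * (Fintype.card α : ℝ)
      + ∑ pq ∈ T.offDiag, (((A pq.1) ∩ (A pq.2)).card : ℝ) := by
  classical
  have hA : ∀ i, ((A i).card:ℝ) = ∑ x : α, (if x ∈ A i then (1:ℝ) else 0) := by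
    intro i
    rw [Finset.sum_boole, show univ.filter (fun x => x ∈ A i) = A i from by ext x; simp]
  have hAB : ∀ i j, (((A i) ∩ (A j)).card:ℝ) = ∑ x : α, (if x ∈ A i ∧ x ∈ A j then (1:ℝ) else 0) := by
    intro i j
    rw [Finset.sum_boole, show univ.filter (fun x => x ∈ A i ∧ x ∈ A j) = A i ∩ A j from by
      ext x; simp [Finset.mem_inter]]
  calc 2 * ∑ i ∈ T, ((A i).card:ℝ)
      = ∑ x : α, 2 * ((T.filter fun i => x ∈ A i).card : ℝ) := by
        rw [Finset.sum_congr rfl (fun i _ => hA i), Finset.sum_comm, Finset.mul_sum]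
        apply Finset.sum_congr rfl
        intro x _
        rw [Finset.sum_boole]
    _ ≤ ∑ x : α, (2 + (((T.filter fun i => x ∈ A i).card:ℝ) * ((T.filter fun i => x ∈ A i).card:ℝ)
          - ((T.filter fun i => x ∈ A i).card:ℝ))) := by
        apply Finset.sum_le_sum
        intro x _
        set r : ℕ := (T.filter fun i => x ∈ A i).card
        rcases Nat.lt_or_ge r 2 with h|h
        · interval_cases r <;> norm_num
        · have h2 : (2:ℝ) ≤ r := by exact_mod_cast h
          nlinarith
    _ = 2 * (Fintype.card α : ℝ) + ∑ x : α, (((T.filter fun i => x ∈ A i).card:ℝ)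
          * ((T.filter fun i => x ∈ A i).card:ℝ) - ((T.filter fun i => x ∈ A i).card:ℝ)) := by
        rw [Finset.sum_add_distrib, Finset.sum_const, Finset.card_univ, nsmul_eq_mul]
        ring
    _ = 2 * (Fintype.card α : ℝ) + ∑ pq ∈ T.offDiag, (((A pq.1) ∩ (A pq.2)).card : ℝ) := by
        congr 1
        rw [Finset.sum_congr rfl (fun (pq : I × I) _ => hAB pq.1 pq.2), Finset.sum_comm]
        apply Finset.sum_congr rfl
        intro x _
        have hset : (T.offDiag.filter fun pq => x ∈ A pq.1 ∧ x ∈ A pq.2)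
            = (T.filter fun i => x ∈ A i).offDiag := by
          ext ⟨i,j⟩
          simp only [Finset.mem_filter, Finset.mem_offDiag]
          tauto
        have : ∑ pq ∈ T.offDiag, (if x ∈ A pq.1 ∧ x ∈ A pq.2 then (1:ℝ) else 0)
            = ((T.filter fun i => x ∈ A i).offDiag.card : ℝ) := by
          rw [Finset.sum_boole, hset]
        rw [this, Finset.offDiag_card]
        set r : ℕ := (T.filter fun i => x ∈ A i).card
        have hrr : r ≤ r * r := by
          rcases Nat.eq_zero_or_pos r with h0|h0
          · simp [h0]
          · exact Nat.le_mul_of_pos_left r h0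
        rw [Nat.cast_sub hrr]
        push_cast
        ring

lemma pr_eq_card {α : Type*} [Fintype α] (p : α → Prop) [DecidablePred p] :
    pr p = ((Finset.univ.filter p).card : ℝ) / (Fintype.card α : ℝ) := by
  unfold pr
  congr!

theorem stmt6 (n k t : ℕ) (ε δ : ℝ) (hεlb : ε > (2 : ℝ) ^ (-(k : ℝ)/12))
    (hδ0 : 0 ≤ δ) (hδ1 : δ ≤ 1)
    (hεδ : ε = 2 * (1 - δ) ^ ((k : ℝ)/2))
    (f : Fin t → (Fin n → Bool) → Bool)
    (B : (Fin k → Fin n → Bool) → (Fin k → Bool))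
    (h1 : ∀ i j, i ≠ j →
      pr (fun x : Fin k → Fin n → Bool => (xorf (f i) x ↔ xorf (f j) x))
        < 1/2 + ε^6/2)
    (h2 : ∀ i, pr (fun x : Fin k → Fin n → Bool =>
        (fun l => f i (x l)) = B x) ≥ ε) :
    (t : ℝ) ≤ 2 / ε := by
  classical
  by_contra hcon
  push_neg at hcon
  have hε0 : 0 < ε := lt_trans (Real.rpow_pos_of_pos (by norm_num) _) hεlb
  have h2e : (0:ℝ) < 2/ε := div_pos (by norm_num) hε0
  have htpos : 0 < t := by
    have : (0:ℝ) < t := lt_trans h2e hcon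
    exact_mod_cast this
  set N : ℝ := (Fintype.card (Fin k → Fin n → Bool):ℝ) with hNdef
  have hNpos : 0 < N := by
    rw [hNdef]
    exact_mod_cast Fintype.card_pos
  set M : ℝ := (Fintype.card (Fin n → Bool):ℝ) with hMdef
  have hMpos : 0 < M := by
    rw [hMdef]
    exact_mod_cast Fintype.card_pos
  have hNM : N = M^k := by
    rw [hNdef, hMdef, Fintype.card_fun]
    push_cast
    simp
  -- the agreement sets
  set A : Fin t → Finset (Fin k → Fin n → Bool) :=
    fun i => univ.filter (fun x => (fun l => f i (x l)) = B x) with hAdef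
  have big : ∀ i, ε * N ≤ ((A i).card:ℝ) := by
    intro i
    have := h2 i
    rw [pr_eq_card, ge_iff_le, le_div_iff₀ hNpos] at this
    exact this
  have hε1 : ε ≤ 1 := by
    have h1le : ((A ⟨0, htpos⟩).card : ℝ) ≤ N := by
      rw [hNdef]
      exact_mod_cast Finset.card_le_card (Finset.subset_univ _) |>.trans (le_of_eq (Finset.card_univ))
    have := big ⟨0, htpos⟩
    nlinarith
  have hk1 : 1 ≤ k := by
    rcases Nat.eq_zero_or_pos k with h0 | h0
    · exfalso
      rw [h0] at hεlb
      simp at hεlb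
      linarith
    · exact h0
  -- per-pair strict bound
  have pair : ∀ i j : Fin t, i ≠ j →
      (((A i ∩ A j).card:ℝ)) < ε ^ ((68:ℝ)/25) * N := by
    intro i j hij
    set e : ℕ := (univ.filter fun y : Fin n → Bool => f i y = f j y).card with hedef
    have heM : (e:ℝ) ≤ M := by
      rw [hedef, hMdef]
      exact_mod_cast (Finset.card_filter_le _ _).trans (le_of_eq Finset.card_univ)
    have he0 : (0:ℝ) ≤ e := Nat.cast_nonneg _
    -- xor agreement probability
    have hxor := h1 i j hij
    rw [pr_eq_card] at hxor
    have hxcount := xor_count n k (f i) (f j)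
    rw [← hedef, ← hNdef, ← hMdef] at hxcount
    rw [div_lt_iff₀ hNpos] at hxor
    rw [hxcount] at hxor
    -- z^k < ε^6
    set z : ℝ := (2*(e:ℝ) - M)/M with hzdef
    have hzk : z^k < ε^6 := by
      have hSk : (2*(e:ℝ) - M)^k < ε^6 * N := by nlinarith
      rw [hzdef, div_pow, div_lt_iff₀ (by positivity), ← hNM]
      linarith [hSk]
    have hz1 : z ≤ 1 := by
      rw [hzdef, div_le_one hMpos]
      linarith
    -- x = ε^(6/k)
    set x : ℝ := ε ^ ((6:ℝ)/(k:ℝ)) with hxdef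
    have hx0 : 0 < x := Real.rpow_pos_of_pos hε0 _
    have hxk : x^k = ε^6 := by
      rw [hxdef, ← Real.rpow_natCast (ε ^ ((6:ℝ)/(k:ℝ))) k, ← Real.rpow_mul (le_of_lt hε0),
        div_mul_cancel₀ _ (by exact_mod_cast Nat.one_le_iff_ne_zero.mp hk1 : ((k:ℝ) ≠ 0)),
        show ((6:ℝ)) = ((6:ℕ):ℝ) by norm_num, Real.rpow_natCast]
    have hzx : z < x := by
      rcases le_or_gt z 0 with h0 | h0
      · linarith
      · by_contra hc
        push_neg at hc
        have : x^k ≤ z^k := pow_le_pow_left₀ (le_of_lt hx0) hc k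
        rw [hxk] at this
        linarith
    -- a = e/M
    set a : ℝ := (e:ℝ)/M with hadef2
    have ha0 : 0 ≤ a := by positivity
    have haz : a = (1+z)/2 := by
      rw [hadef2, hzdef]
      field_simp
      ring
    have halt : a < (1+x)/2 := by rw [haz]; linarith
    -- card bound
    have hsub : (A i ∩ A j) ⊆ (univ.filter fun x : Fin k → Fin n → Bool => ∀ l, f i (x l) = f j (x l)) := by
      intro y hy
      rw [Finset.mem_inter, hAdef] at hy
      simp only [Finset.mem_filter, Finset.mem_univ, true_and] at hy ⊢
      intro l
      rw [congrFun hy.1 l, congrFun hy.2 l]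
    have hcard1 : ((A i ∩ A j).card : ℝ) ≤ (e:ℝ)^k := by
      have := Finset.card_le_card hsub
      rw [all_count n k (f i) (f j)] at this
      exact_mod_cast this
    have hak : (e:ℝ)^k = a^k * M^k := by
      rw [hadef2, div_pow]
      field_simp
    have hstrict : a^k < ((1+x)/2)^k := by
      apply pow_lt_pow_left₀ halt ha0 (Nat.one_le_iff_ne_zero.mp hk1)
    have hfinal : ((1+x)/2)^k ≤ ε ^ ((68:ℝ)/25) := pair_pow_bound k hk1 ε hε0 hε1 hεlb
    calc ((A i ∩ A j).card : ℝ) ≤ (e:ℝ)^k := hcard1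
      _ = a^k * M^k := hak
      _ < ((1+x)/2)^k * M^k := by
          apply mul_lt_mul_of_pos_right hstrict (by positivity)
      _ ≤ ε ^ ((68:ℝ)/25) * M^k := by
          apply mul_le_mul_of_nonneg_right hfinal (by positivity)
      _ = ε ^ ((68:ℝ)/25) * N := by rw [hNM]
  -- choose m and T
  set m : ℕ := ⌊2/ε⌋₊ with hmdef
  have hm2 : 2 ≤ m := Nat.le_floor (by rw [le_div_iff₀ hε0]; norm_num; linarith)
  have hmub : (m:ℝ) ≤ 2/ε := Nat.floor_le (by positivity)
  have hmlt : m < t := by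
    have : (m:ℝ) < t := lt_of_le_of_lt hmub hcon
    exact_mod_cast this
  set T : Finset (Fin t) :=
    (univ : Finset (Fin m)).map ⟨fun i => ⟨i.val, lt_trans i.isLt hmlt⟩,
      fun a b hab => by
        simpa [Fin.ext_iff] using hab⟩ with hTdef
  have hTcard : T.card = m := by
    rw [hTdef, Finset.card_map, Finset.card_univ, Fintype.card_fin]
  -- lower bound on sum of sizes
  have hsum_lb : (m:ℝ) * (ε*N) ≤ ∑ i ∈ T, ((A i).card:ℝ) := by
    calc (m:ℝ) * (ε*N) = ∑ _i ∈ T, ε*N := by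
          rw [Finset.sum_const, hTcard, nsmul_eq_mul]
      _ ≤ ∑ i ∈ T, ((A i).card:ℝ) := Finset.sum_le_sum (fun i _ => big i)
  -- upper bound on pairwise sum
  have hoffcard : (T.offDiag).card = m*m - m := by
    rw [Finset.offDiag_card, hTcard]
  have hoff : ∑ pq ∈ T.offDiag, ((A pq.1 ∩ A pq.2).card:ℝ)
      < ((m:ℝ)*(m:ℝ) - m) * (ε ^ ((68:ℝ)/25) * N) := by
    have hne : (T.offDiag).Nonempty := by
      rw [← Finset.card_pos, hoffcard]
      have h1 : m*2 ≤ m*m := Nat.mul_le_mul_left m hm2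
      have h2 : m < m*m := lt_of_lt_of_le (by omega) h1
      exact Nat.sub_pos_of_lt h2
    calc ∑ pq ∈ T.offDiag, ((A pq.1 ∩ A pq.2).card:ℝ)
        < ∑ _pq ∈ T.offDiag, ε ^ ((68:ℝ)/25) * N := by
          apply Finset.sum_lt_sum_of_nonempty hne
          intro pq hpq
          exact pair pq.1 pq.2 (Finset.mem_offDiag.mp hpq).2.2
      _ = ((m:ℝ)*(m:ℝ) - m) * (ε ^ ((68:ℝ)/25) * N) := by
          rw [Finset.sum_const, hoffcard, nsmul_eq_mul]
          have hmm : m ≤ m*m := Nat.le_mul_of_pos_left m (by omega)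
          rw [Nat.cast_sub hmm]
          push_cast
          ring
  have hbonf := bonferroni T A
  rw [← hNdef] at hbonf
  have hcount := counting ε hε0 hε1
  rw [← hmdef] at hcount
  -- combine
  clear_value N M A T
  have hcountN : ((m:ℝ)*(m:ℝ) - m) * (ε ^ ((68:ℝ)/25) * N) ≤ (2*((m:ℝ)*ε) - 2) * N := by
    rw [← mul_assoc]
    exact mul_le_mul_of_nonneg_right hcount (le_of_lt hNpos)
  have hfin : 2*((m:ℝ)*(ε*N)) < 2*N + (2*((m:ℝ)*ε) - 2)*N := by
    have s1 : 2*((m:ℝ)*(ε*N)) ≤ 2*∑ i ∈ T, ((A i).card:ℝ) := by linarith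
    have s3 : 2*N + ∑ pq ∈ T.offDiag, ((A pq.1 ∩ A pq.2).card:ℝ)
        < 2*N + ((m:ℝ)*(m:ℝ) - m)*(ε ^ ((68:ℝ)/25) * N) := by linarith
    have s4 : 2*N + ((m:ℝ)*(m:ℝ) - m)*(ε ^ ((68:ℝ)/25) * N)
        ≤ 2*N + (2*((m:ℝ)*ε) - 2)*N := by linarith
    exact (s1.trans hbonf).trans_lt (s3.trans_le s4)
  have h0 : 2*N + (2*((m:ℝ)*ε) - 2)*N = 2*((m:ℝ)*(ε*N)) := by ring
  rw [h0] at hfin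
  exact lt_irrefl _ hfin
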